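/- arXiv:1303.6837 — 4 statements merged into one kernel-verified Lean document; each statement's English description precedes it below -/
import Mathlib

section
/- Let T ∈ ℝ^{n×n} be symmetric and Z ∈ ℝ^{n×n} be such that the 2n×2n block matrix W := [[T, Z],[Zᵀ, T]] is positive semidefinite. Let h < h' be reals, δ := h' − h, τ ∈ [h, h'], t ∈ ℝ, and let ξ : [t−h', t−h] → ℝⁿ be C¹. Then δ ∫_{t−h'}^{t−h} ξ'(s)ᵀ T ξ'(s) ds ≥ [a; b]ᵀ W [a; b], where a := ξ(t−h) − ξ(t−τ) and b := ξ(t−τ) − ξ(t−h'). -/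
open Matrix Set MeasureTheory intervalIntegral

/-- dot with fixed vector as a CLM -/
noncomputable def dotCLM {n : ℕ} (w : Fin n → ℝ) : (Fin n → ℝ) →L[ℝ] ℝ :=
  LinearMap.toContinuousLinearMap
    { toFun := fun v => v ⬝ᵥ w
      map_add' := fun a b => add_dotProduct a b w
      map_smul' := fun c a => smul_dotProduct c a w }

lemma dotCLM_apply {n : ℕ} (w v : Fin n → ℝ) : dotCLM w v = v ⬝ᵥ w := rfl

lemma integral_dot {n : ℕ} {u v : ℝ} (g : ℝ → Fin n → ℝ)
    (hg : IntervalIntegrable g volume u v) (w : Fin n → ℝ) :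
    ∫ s in u..v, (g s ⬝ᵥ w) = (∫ s in u..v, g s) ⬝ᵥ w := by
  rw [← dotCLM_apply w, ← (dotCLM w).intervalIntegral_comp_comm hg]
  simp [dotCLM_apply]

lemma dot_symm {n : ℕ} {T : Matrix (Fin n) (Fin n) ℝ} (hT : T.IsSymm) (x y : Fin n → ℝ) :
    x ⬝ᵥ (T *ᵥ y) = y ⬝ᵥ (T *ᵥ x) := by
  rw [Matrix.dotProduct_mulVec, ← Matrix.mulVec_transpose, hT.eq, dotProduct_comm]

lemma contOn_dot {n : ℕ} {s : Set ℝ} {g : ℝ → Fin n → ℝ} (hg : ContinuousOn g s)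
    (w : Fin n → ℝ) : ContinuousOn (fun x => g x ⬝ᵥ w) s := by
  simp only [dotProduct]
  exact continuousOn_finset_sum _ fun i _ =>
    ((continuous_apply i).comp_continuousOn hg).mul continuousOn_const

lemma contOn_quad {n : ℕ} {s : Set ℝ} {g : ℝ → Fin n → ℝ} (hg : ContinuousOn g s)
    (T : Matrix (Fin n) (Fin n) ℝ) : ContinuousOn (fun x => g x ⬝ᵥ (T *ᵥ g x)) s := by
  simp only [dotProduct, Matrix.mulVec, dotProduct]
  exact continuousOn_finset_sum _ fun i _ =>
    ((continuous_apply i).comp_continuousOn hg).mul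
      (continuousOn_finset_sum _ fun j _ =>
        continuousOn_const.mul ((continuous_apply j).comp_continuousOn hg))

lemma jensen {n : ℕ} (T : Matrix (Fin n) (Fin n) ℝ) (hT : T.IsSymm)
    (hTpsd : ∀ u : Fin n → ℝ, 0 ≤ u ⬝ᵥ (T *ᵥ u)) {u v : ℝ} (huv : u ≤ v)
    (g : ℝ → Fin n → ℝ) (hg : ContinuousOn g (Icc u v)) :
    (∫ s in u..v, g s) ⬝ᵥ (T *ᵥ ∫ s in u..v, g s) ≤
      (v - u) * ∫ s in u..v, g s ⬝ᵥ (T *ᵥ g s) := by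
  rcases eq_or_lt_of_le huv with rfl | hlt
  · simp
  have hgi : IntervalIntegrable g volume u v :=
    (hg.mono (by rw [uIcc_of_le huv])).intervalIntegrable
  set c : Fin n → ℝ := ∫ s in u..v, g s with hc
  have hquad : IntervalIntegrable (fun s => g s ⬝ᵥ (T *ᵥ g s)) volume u v :=
    ((contOn_quad hg T).mono (by rw [uIcc_of_le huv])).intervalIntegrable
  have hdoti : IntervalIntegrable (fun s => g s ⬝ᵥ (T *ᵥ c)) volume u v :=
    ((contOn_dot hg (T *ᵥ c)).mono (by rw [uIcc_of_le huv])).intervalIntegrable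
  have key : ∀ s, 2*(v-u)*(g s ⬝ᵥ (T *ᵥ c)) - c ⬝ᵥ (T *ᵥ c)
      ≤ (v-u)^2 * (g s ⬝ᵥ (T *ᵥ g s)) := by
    intro s
    have h0 := hTpsd ((v - u) • g s - c)
    have hcg : c ⬝ᵥ (T *ᵥ g s) = g s ⬝ᵥ (T *ᵥ c) := dot_symm hT c (g s)
    simp only [sub_dotProduct, dotProduct_sub, Matrix.mulVec_sub,
      Matrix.mulVec_smul, smul_dotProduct, dotProduct_smul,
      smul_eq_mul, hcg] at h0
    nlinarith [h0]
  have hint : ∫ s in u..v, (2*(v-u)*(g s ⬝ᵥ (T *ᵥ c)) - c ⬝ᵥ (T *ᵥ c))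
      ≤ ∫ s in u..v, (v-u)^2 * (g s ⬝ᵥ (T *ᵥ g s)) := by
    apply intervalIntegral.integral_mono_on huv
    · exact ((hdoti.const_mul _).sub (intervalIntegrable_const))
    · exact hquad.const_mul _
    · exact fun s _ => key s
  have hL : ∫ s in u..v, (2*(v-u)*(g s ⬝ᵥ (T *ᵥ c)) - c ⬝ᵥ (T *ᵥ c))
      = 2*(v-u)*(c ⬝ᵥ (T *ᵥ c)) - (v-u)*(c ⬝ᵥ (T *ᵥ c)) := by
    rw [intervalIntegral.integral_sub ((hdoti.const_mul _)) intervalIntegrable_const,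
      intervalIntegral.integral_const_mul, integral_dot g hgi (T *ᵥ c),
      intervalIntegral.integral_const, smul_eq_mul, mul_comm]
  have hR : ∫ s in u..v, (v-u)^2 * (g s ⬝ᵥ (T *ᵥ g s))
      = (v-u)^2 * ∫ s in u..v, g s ⬝ᵥ (T *ᵥ g s) :=
    intervalIntegral.integral_const_mul _ _
  rw [hL, hR] at hint
  have hpos : (0:ℝ) < v - u := by linarith
  nlinarith [hint]

lemma ftc_sub {n : ℕ} {A B : ℝ} (ξ ξ' : ℝ → Fin n → ℝ)
    (hderiv : ∀ s ∈ Icc A B, HasDerivWithinAt ξ (ξ' s) (Icc A B) s)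
    (hcont : ContinuousOn ξ' (Icc A B))
    {t1 t2 : ℝ} (h12 : t1 ≤ t2) (hsub : Icc t1 t2 ⊆ Icc A B) :
    ∫ s in t1..t2, ξ' s = ξ t2 - ξ t1 := by
  rcases eq_or_lt_of_le h12 with rfl | hlt
  · simp
  have hAB : Icc t1 t2 ⊆ Icc A B := hsub
  have h1 : A ≤ t1 := (hAB (left_mem_Icc.2 h12)).1
  have h2 : t2 ≤ B := (hAB (right_mem_Icc.2 h12)).2
  apply intervalIntegral.integral_eq_sub_of_hasDeriv_right_of_le h12
  · exact fun x hx => ((hderiv x (hAB hx)).continuousWithinAt).mono hAB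
  · intro x hx
    have hnb : Icc A B ∈ nhdsWithin x (Ioi x) := by
      apply Filter.mem_of_superset
        (Filter.inter_mem (mem_nhdsWithin_of_mem_nhds (Iio_mem_nhds (lt_of_lt_of_le hx.2 h2)))
          self_mem_nhdsWithin)
      rintro y ⟨hy1, hy2⟩
      exact ⟨le_of_lt (lt_of_le_of_lt (le_trans h1 hx.1.le) hy2), hy1.le⟩
    exact (hderiv x ⟨le_trans h1 hx.1.le, le_trans hx.2.le h2⟩).mono_of_mem_nhdsWithin hnb
  · exact ((hcont.mono hAB).mono (by rw [uIcc_of_le h12])).intervalIntegrable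

/-- **Reciprocally convex combination bound** (eq. (12) of the paper).
If the block matrix `W = [[T, Z], [Zᵀ, T]]` is positive semidefinite, `h < h'`,
`τ ∈ [h, h']` and `ξ` is `C¹` on `[t-h', t-h]`, then
`δ ∫_{t-h'}^{t-h} ξ'(s)ᵀ T ξ'(s) ds ≥ [a; b]ᵀ W [a; b]` with `δ = h' - h`,
`a = ξ(t-h) - ξ(t-τ)` and `b = ξ(t-τ) - ξ(t-h')`. -/
theorem reciprocally_convex_bound {n : ℕ} (T Z : Matrix (Fin n) (Fin n) ℝ)
    (hT : T.IsSymm)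
    (hW : (Matrix.fromBlocks T Z Zᵀ T).PosSemidef)
    (h h' τ t : ℝ) (hhh : h < h') (hτ : τ ∈ Set.Icc h h')
    (ξ ξ' : ℝ → Fin n → ℝ)
    (hderiv : ∀ s ∈ Set.Icc (t - h') (t - h),
      HasDerivWithinAt ξ (ξ' s) (Set.Icc (t - h') (t - h)) s)
    (hcont : ContinuousOn ξ' (Set.Icc (t - h') (t - h))) :
    (Sum.elim (ξ (t - h) - ξ (t - τ)) (ξ (t - τ) - ξ (t - h'))) ⬝ᵥ
        ((Matrix.fromBlocks T Z Zᵀ T) *ᵥ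
          Sum.elim (ξ (t - h) - ξ (t - τ)) (ξ (t - τ) - ξ (t - h'))) ≤
      (h' - h) * ∫ s in (t - h')..(t - h), (ξ' s) ⬝ᵥ (T *ᵥ ξ' s) := by
  set A := t - h' with hA
  set B := t - h with hB
  set m := t - τ with hm
  obtain ⟨hτ1, hτ2⟩ := hτ
  have hAm : A ≤ m := by simp [hA, hm]; linarith
  have hmB : m ≤ B := by simp [hm, hB]; linarith
  have hAB : A ≤ B := le_trans hAm hmB
  set a : Fin n → ℝ := ξ B - ξ m with ha
  set b : Fin n → ℝ := ξ m - ξ A with hb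
  -- T is PSD
  have hTpsd : ∀ u : Fin n → ℝ, 0 ≤ u ⬝ᵥ (T *ᵥ u) := by
    intro u
    have := hW.dotProduct_mulVec_nonneg (Sum.elim u 0)
    simpa [Matrix.fromBlocks_mulVec, sumElim_dotProduct_sumElim] using this
  -- FTC
  have hIccm : Icc m B ⊆ Icc A B := Icc_subset_Icc hAm le_rfl
  have hIccA : Icc A m ⊆ Icc A B := Icc_subset_Icc le_rfl hmB
  have hfa : ∫ s in m..B, ξ' s = a := by
    rw [ftc_sub ξ ξ' hderiv hcont hmB hIccm]
  have hfb : ∫ s in A..m, ξ' s = b := by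
    rw [ftc_sub ξ ξ' hderiv hcont hAm hIccA]
  -- Jensen bounds
  have hJ1 : a ⬝ᵥ (T *ᵥ a) ≤ (B - m) * ∫ s in m..B, ξ' s ⬝ᵥ (T *ᵥ ξ' s) := by
    have := jensen T hT hTpsd hmB ξ' (hcont.mono hIccm)
    rwa [hfa] at this
  have hJ2 : b ⬝ᵥ (T *ᵥ b) ≤ (m - A) * ∫ s in A..m, ξ' s ⬝ᵥ (T *ᵥ ξ' s) := by
    have := jensen T hT hTpsd hAm ξ' (hcont.mono hIccA)
    rwa [hfb] at this
  set I1 := ∫ s in m..B, ξ' s ⬝ᵥ (T *ᵥ ξ' s) with hI1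
  set I2 := ∫ s in A..m, ξ' s ⬝ᵥ (T *ᵥ ξ' s) with hI2
  have hIsplit : ∫ s in A..B, ξ' s ⬝ᵥ (T *ᵥ ξ' s) = I2 + I1 := by
    rw [← intervalIntegral.integral_add_adjacent_intervals
      (((contOn_quad (hcont.mono hIccA) T).mono (by rw [uIcc_of_le hAm])).intervalIntegrable)
      (((contOn_quad (hcont.mono hIccm) T).mono (by rw [uIcc_of_le hmB])).intervalIntegrable)]
  have hI1nn : 0 ≤ I1 :=
    intervalIntegral.integral_nonneg hmB (fun s _ => hTpsd (ξ' s))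
  have hI2nn : 0 ≤ I2 :=
    intervalIntegral.integral_nonneg hAm (fun s _ => hTpsd (ξ' s))
  -- expand LHS
  have hba : b ⬝ᵥ (Zᵀ *ᵥ a) = a ⬝ᵥ (Z *ᵥ b) := by
    rw [Matrix.dotProduct_mulVec, Matrix.vecMul_transpose, dotProduct_comm]
  have hLHS : (Sum.elim a b) ⬝ᵥ ((Matrix.fromBlocks T Z Zᵀ T) *ᵥ Sum.elim a b)
      = a ⬝ᵥ (T *ᵥ a) + 2 * (a ⬝ᵥ (Z *ᵥ b)) + b ⬝ᵥ (T *ᵥ b) := by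
    simp [Matrix.fromBlocks_mulVec, sumElim_dotProduct_sumElim,
      dotProduct_add, hba]
    ring
  have hδ : h' - h = (m - A) + (B - m) := by rw [hA, hB, hm]; ring
  rw [hIsplit, hLHS, hδ]
  set p : ℝ := B - m with hp'
  set q : ℝ := m - A with hq'
  have hpnn : 0 ≤ p := by simp only [hp']; linarith
  have hqnn : 0 ≤ q := by simp only [hq']; linarith
  clear_value A B m a b I1 I2 p q
  -- cases on degeneracy
  rcases eq_or_lt_of_le hpnn with hp0 | hppos
  · -- p = 0 : m = B, a = 0
    have hmB' : m = B := by simp [hp'] at hp0; linarith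
    have ha0 : a = 0 := by simp [ha, hmB']
    simp only [ha0, zero_dotProduct, dotProduct_zero, Matrix.mulVec_zero]
    nlinarith [hJ2]
  rcases eq_or_lt_of_le hqnn with hq0 | hqpos
  · have hAm' : A = m := by simp [hq'] at hq0; linarith
    have hb0 : b = 0 := by simp [hb, hAm']
    simp only [hb0, zero_dotProduct, dotProduct_zero, Matrix.mulVec_zero]
    nlinarith [hJ1]
  -- nondegenerate case: use PSD of W with scaled vector
  have hZb : 2 * (p * q) * (a ⬝ᵥ (Z *ᵥ b)) ≤ q^2 * (a ⬝ᵥ (T *ᵥ a)) + p^2 * (b ⬝ᵥ (T *ᵥ b)) := by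
    have h0 := hW.dotProduct_mulVec_nonneg (Sum.elim (q • a) (-(p • b)))
    simp only [star_trivial, Matrix.fromBlocks_mulVec, sumElim_dotProduct_sumElim,
      Matrix.mulVec_smul, dotProduct_add, Matrix.mulVec_add, smul_dotProduct,
      dotProduct_smul, smul_eq_mul, neg_dotProduct,
      dotProduct_neg, Matrix.mulVec_neg, Sum.elim_comp_inl, Sum.elim_comp_inr,
      hba] at h0
    nlinarith [h0]
  have hpq : (0:ℝ) < p * q := mul_pos hppos hqpos
  have H1 : 0 ≤ q*(p+q)*(p*I1 - a ⬝ᵥ (T *ᵥ a)) :=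
    mul_nonneg (mul_nonneg hqnn (by linarith)) (by linarith)
  have H2 : 0 ≤ p*(p+q)*(q*I2 - b ⬝ᵥ (T *ᵥ b)) :=
    mul_nonneg (mul_nonneg hpnn (by linarith)) (by linarith)
  have hfin : (p*q) * (a ⬝ᵥ (T *ᵥ a) + 2 * (a ⬝ᵥ (Z *ᵥ b)) + b ⬝ᵥ (T *ᵥ b))
      ≤ (p*q) * ((q + p) * (I2 + I1)) := by nlinarith [H1, H2, hZb]
  exact le_of_mul_le_mul_left hfin hpq
end

section
/- Let T, Z ∈ ℝ^{n×n} with T symmetric, and suppose the 2n×2n block matrix [[T, Z],[Zᵀ, T]] is positive semidefinite. Then for every λ ∈ (0,1) and all a, b ∈ ℝⁿ: (1/λ) aᵀTa + (1/(1−λ)) bᵀTb ≥ aᵀTa + aᵀZb + bᵀZᵀa + bᵀTb. -/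
open Matrix Set

/-- **Reciprocal convexity lemma** underlying bound (12) of the paper.
If the block matrix `[[T, Z], [Zᵀ, T]]` is positive semidefinite, then for every
`λ ∈ (0,1)` and all vectors `a, b`:
`(1/λ) aᵀTa + (1/(1-λ)) bᵀTb ≥ aᵀTa + aᵀZb + bᵀZᵀa + bᵀTb`. -/
theorem reciprocal_convexity {n : ℕ} (T Z : Matrix (Fin n) (Fin n) ℝ)
    (hT : T.IsSymm)
    (hW : (Matrix.fromBlocks T Z Zᵀ T).PosSemidef)
    (l : ℝ) (hl : l ∈ Set.Ioo (0 : ℝ) 1) (a b : Fin n → ℝ) :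
    a ⬝ᵥ (T *ᵥ a) + a ⬝ᵥ (Z *ᵥ b) + b ⬝ᵥ (Zᵀ *ᵥ a) + b ⬝ᵥ (T *ᵥ b) ≤
      (1 / l) * (a ⬝ᵥ (T *ᵥ a)) + (1 / (1 - l)) * (b ⬝ᵥ (T *ᵥ b)) := by
  obtain ⟨hl0, hl1⟩ := hl
  have hl1' : (0:ℝ) < 1 - l := by linarith
  set t : ℝ := Real.sqrt ((1 - l) / l) with ht
  set s : ℝ := Real.sqrt (l / (1 - l)) with hs
  have ht2 : t ^ 2 = (1 - l) / l := Real.sq_sqrt (by positivity)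
  have hs2 : s ^ 2 = l / (1 - l) := Real.sq_sqrt (by positivity)
  have hts : t * s = 1 := by
    rw [ht, hs, ← Real.sqrt_mul (by positivity)]
    rw [div_mul_div_comm, mul_comm, div_self (by positivity), Real.sqrt_one]
  have key := hW.dotProduct_mulVec_nonneg (Sum.elim (t • a) (-(s • b)))
  have hT0 : (0:ℝ) ≤ t ^ 2 * (a ⬝ᵥ (T *ᵥ a)) + s ^ 2 * (b ⬝ᵥ (T *ᵥ b))
      - (a ⬝ᵥ (Z *ᵥ b)) - (b ⬝ᵥ (Zᵀ *ᵥ a)) := by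
    have hexp : star (Sum.elim (t • a) (-(s • b))) ⬝ᵥ
        ((Matrix.fromBlocks T Z Zᵀ T) *ᵥ Sum.elim (t • a) (-(s • b)))
        = t ^ 2 * (a ⬝ᵥ (T *ᵥ a)) + s ^ 2 * (b ⬝ᵥ (T *ᵥ b))
          - t * s * (a ⬝ᵥ (Z *ᵥ b)) - t * s * (b ⬝ᵥ (Zᵀ *ᵥ a)) := by
      rw [Matrix.fromBlocks_mulVec]
      simp only [star_trivial, sumElim_dotProduct_sumElim,
        Matrix.mulVec_smul, Matrix.mulVec_neg, Matrix.smul_mulVec,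
        dotProduct_smul, smul_dotProduct, dotProduct_add,
        dotProduct_neg, neg_dotProduct, smul_eq_mul,
        Sum.elim_comp_inl, Sum.elim_comp_inr]
      ring
    rw [hexp, hts] at key
    linarith
  have h1 : t ^ 2 = 1 / l - 1 := by rw [ht2]; field_simp
  have h2 : s ^ 2 = 1 / (1 - l) - 1 := by rw [hs2]; field_simp; ring
  rw [h1, h2] at hT0
  nlinarith [hT0]
end

section
/- Fix i ∈ {1,…,M}. Let π_{i1}, …, π_{iM} ∈ ℝ with π_{ij} ≥ 0 for all j ≠ i and π_{ii} ≤ 0; let Q₁, …, Q_M be symmetric positive semidefinite n×n matrices and 𝒬 a symmetric matrix with Σ_{j=1}^M π_{ij} Q_j ⪯ 𝒬; let 0 ≤ h₁ ≤ h_j ≤ h_M for all j; let η ≥ −π_{ii} and let G be a symmetric matrix with (−π_{ii}) Q_i ⪯ G (in the paper, G = η Q_κ with κ = argmax_j |π_{jj}|). Then for every continuous ξ : ℝ → ℝⁿ and every t: Σ_{j=1}^M π_{ij} ∫_{t−h_j}^{t} ξ(s)ᵀ Q_j ξ(s) ds ≤ ∫_{t−h_M}^{t} ξ(s)ᵀ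 𝒬 ξ(s) ds + ∫_{t−h_M}^{t−h₁} ξ(s)ᵀ G ξ(s) ds. -/
open Matrix Set

private lemma psd_dot_nonneg {n : ℕ} {A : Matrix (Fin n) (Fin n) ℝ}
    (hA : A.PosSemidef) (x : Fin n → ℝ) : 0 ≤ x ⬝ᵥ (A *ᵥ x) := by
  simpa using hA.re_dotProduct_nonneg x

private lemma quad_cont {n : ℕ} (A : Matrix (Fin n) (Fin n) ℝ)
    {ξ : ℝ → Fin n → ℝ} (hξ : Continuous ξ) :
    Continuous (fun s => (ξ s) ⬝ᵥ (A *ᵥ ξ s)) := by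
  simp only [dotProduct, Matrix.mulVec, dotProduct]
  refine continuous_finset_sum _ fun k _ => ?_
  exact ((continuous_apply k).comp hξ).mul
    (continuous_finset_sum _ fun l _ =>
      (continuous_const.mul ((continuous_apply l).comp hξ)))

/-- **Upper bound (30)** in the infinitesimal-generator computation of the
stochastic stability analysis: bound on the transition-rate-weighted sum of
integrals `Σ_j π_{ij} ∫_{t−h_j}^{t} ξᵀ Q_j ξ`. -/
theorem transition_rate_integral_bound {n M : ℕ} (i : Fin M) (π : Fin M → ℝ)
    (hπ : ∀ j, j ≠ i → 0 ≤ π j) (hπi : π i ≤ 0)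
    (Q : Fin M → Matrix (Fin n) (Fin n) ℝ) (hQ : ∀ j, (Q j).PosSemidef)
    (calQ : Matrix (Fin n) (Fin n) ℝ) (hcalQ : calQ.IsSymm)
    (hQle : (calQ - ∑ j, π j • Q j).PosSemidef)
    (hdel : Fin M → ℝ) (hlo hhi : ℝ) (hlo0 : 0 ≤ hlo)
    (hbd : ∀ j, hlo ≤ hdel j ∧ hdel j ≤ hhi)
    (η : ℝ) (hη : -π i ≤ η)
    (G : Matrix (Fin n) (Fin n) ℝ) (hG : G.IsSymm)
    (hGle : (G - (-(π i)) • Q i).PosSemidef)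
    (ξ : ℝ → Fin n → ℝ) (hξ : Continuous ξ) (t : ℝ) :
    ∑ j, π j * ∫ s in (t - hdel j)..t, (ξ s) ⬝ᵥ (Q j *ᵥ ξ s) ≤
      (∫ s in (t - hhi)..t, (ξ s) ⬝ᵥ (calQ *ᵥ ξ s)) +
        ∫ s in (t - hhi)..(t - hlo), (ξ s) ⬝ᵥ (G *ᵥ ξ s) := by
  set f : Matrix (Fin n) (Fin n) ℝ → ℝ → ℝ := fun A s => (ξ s) ⬝ᵥ (A *ᵥ ξ s) with hf
  have hint : ∀ A a b, IntervalIntegrable (f A) MeasureTheory.volume a b :=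
    fun A a b => (quad_cont A hξ).intervalIntegrable a b
  have hord : ∀ j, t - hhi ≤ t - hdel j ∧ t - hdel j ≤ t - hlo ∧ t - hlo ≤ t := by
    intro j
    have h1 := (hbd j).1; have h2 := (hbd j).2
    constructor; · linarith
    constructor <;> linarith
  have hhit : t - hhi ≤ t := le_trans (le_trans (hord i).1 (hord i).2.1) (hord i).2.2
  have hhilo : t - hhi ≤ t - hlo := le_trans (hord i).1 (hord i).2.1
  -- Step 1: for j ≠ i
  have step1 : ∀ j, j ≠ i →
      π j * ∫ s in (t - hdel j)..t, f (Q j) s ≤ π j * ∫ s in (t - hhi)..t, f (Q j) s := by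
    intro j hj
    refine mul_le_mul_of_nonneg_left ?_ (hπ j hj)
    refine intervalIntegral.integral_mono_interval (hord j).1
      (le_trans (hord j).2.1 (hord j).2.2) le_rfl ?_ (hint _ _ _)
    filter_upwards with s
    exact psd_dot_nonneg (hQ j) (ξ s)
  -- Step 2: for j = i
  have split_i : (∫ s in (t - hhi)..t, f (Q i) s) =
      (∫ s in (t - hhi)..(t - hdel i), f (Q i) s) + ∫ s in (t - hdel i)..t, f (Q i) s :=
    (intervalIntegral.integral_add_adjacent_intervals (hint _ _ _) (hint _ _ _)).symm
  have step2 : π i * ∫ s in (t - hdel i)..t, f (Q i) s ≤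
      π i * (∫ s in (t - hhi)..t, f (Q i) s) +
        (-(π i)) * ∫ s in (t - hhi)..(t - hlo), f (Q i) s := by
    have hsub : (∫ s in (t - hhi)..(t - hdel i), f (Q i) s) ≤
        ∫ s in (t - hhi)..(t - hlo), f (Q i) s := by
      refine intervalIntegral.integral_mono_interval le_rfl (hord i).1 (hord i).2.1 ?_
        (hint _ _ _)
      filter_upwards with s
      exact psd_dot_nonneg (hQ i) (ξ s)
    have := mul_le_mul_of_nonneg_left hsub (neg_nonneg.mpr hπi)
    nlinarith [split_i]
  -- Step 3: sum over all j
  have sum_split : ∀ g : Fin M → ℝ, ∑ j, g j = g i + ∑ j ∈ Finset.univ.erase i, g j := by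
    intro g
    rw [Finset.add_sum_erase _ g (Finset.mem_univ i)]
  have main : ∑ j, π j * ∫ s in (t - hdel j)..t, f (Q j) s ≤
      (∑ j, π j * ∫ s in (t - hhi)..t, f (Q j) s) +
        (-(π i)) * ∫ s in (t - hhi)..(t - hlo), f (Q i) s := by
    rw [sum_split (fun j => π j * ∫ s in (t - hdel j)..t, f (Q j) s),
      sum_split (fun j => π j * ∫ s in (t - hhi)..t, f (Q j) s)]
    have hrest : ∑ j ∈ Finset.univ.erase i, π j * ∫ s in (t - hdel j)..t, f (Q j) s ≤
        ∑ j ∈ Finset.univ.erase i, π j * ∫ s in (t - hhi)..t, f (Q j) s :=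
      Finset.sum_le_sum fun j hj => step1 j (Finset.ne_of_mem_erase hj)
    have := step2
    linarith
  -- Step 4: exchange sum and integral, then matrix comparisons
  have ptw : ∀ s, f (∑ j, π j • Q j) s = ∑ j, π j * f (Q j) s := by
    intro s
    have key : ∀ u : Finset (Fin M),
        ξ s ⬝ᵥ ((∑ j ∈ u, π j • Q j) *ᵥ ξ s) = ∑ j ∈ u, π j * (ξ s ⬝ᵥ (Q j *ᵥ ξ s)) := by
      intro u
      induction u using Finset.induction with
      | empty => simp [Matrix.zero_mulVec]
      | insert _ _ h ih =>
          simp [Finset.sum_insert h, Matrix.add_mulVec, dotProduct_add,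
            Matrix.smul_mulVec, smul_eq_mul, ih]
    simpa [hf] using key Finset.univ
  have sum_int : ∑ j, π j * ∫ s in (t - hhi)..t, f (Q j) s =
      ∫ s in (t - hhi)..t, f (∑ j, π j • Q j) s := by
    calc ∑ j, π j * ∫ s in (t - hhi)..t, f (Q j) s
        = ∑ j, ∫ s in (t - hhi)..t, π j * f (Q j) s := by
          simp [intervalIntegral.integral_const_mul]
      _ = ∫ s in (t - hhi)..t, ∑ j, π j * f (Q j) s :=
          (intervalIntegral.integral_finset_sum fun j _ =>
            (continuous_const.mul (quad_cont (Q j) hξ)).intervalIntegrable _ _).symm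
      _ = ∫ s in (t - hhi)..t, f (∑ j, π j • Q j) s := by
          refine intervalIntegral.integral_congr fun s _ => (ptw s).symm
  have cmp1 : (∫ s in (t - hhi)..t, f (∑ j, π j • Q j) s) ≤
      ∫ s in (t - hhi)..t, f calQ s := by
    refine intervalIntegral.integral_mono_on hhit (hint _ _ _) (hint _ _ _) fun s _ => ?_
    have h := psd_dot_nonneg hQle (ξ s)
    simp only [Matrix.sub_mulVec, dotProduct_sub] at h
    linarith
  have cmp2 : (-(π i)) * ∫ s in (t - hhi)..(t - hlo), f (Q i) s ≤
      ∫ s in (t - hhi)..(t - hlo), f G s := by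
    rw [← intervalIntegral.integral_const_mul]
    refine intervalIntegral.integral_mono_on hhilo
      ((continuous_const.mul (quad_cont (Q i) hξ)).intervalIntegrable _ _) (hint _ _ _)
      fun s _ => ?_
    have h := psd_dot_nonneg hGle (ξ s)
    simp only [Matrix.sub_mulVec, dotProduct_sub, Matrix.smul_mulVec,
      dotProduct_smul, smul_eq_mul] at h
    linarith
  calc ∑ j, π j * ∫ s in (t - hdel j)..t, f (Q j) s
      ≤ (∑ j, π j * ∫ s in (t - hhi)..t, f (Q j) s) +
        (-(π i)) * ∫ s in (t - hhi)..(t - hlo), f (Q i) s := main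
    _ ≤ (∫ s in (t - hhi)..t, f calQ s) + ∫ s in (t - hhi)..(t - hlo), f G s := by
        rw [sum_int]; exact add_le_add cmp1 cmp2
end

section
/- Fix i ∈ {1,…,M}. Let π_{i1}, …, π_{iM} ∈ ℝ with π_{ij} ≥ 0 for all j ≠ i and π_{ii} = −Σ_{j≠i} π_{ij}; let S be a symmetric positive semidefinite n×n matrix; let 0 < h₁ ≤ h_j ≤ h_M for all j; and let η ≥ −π_{ii}. Then for every C¹ function ξ : ℝ → ℝⁿ and every t: Σ_{j=1}^M π_{ij} h_j ∫_{−h_j}^{0} ∫_{t+s}^{t} ξ'(θ)ᵀ S ξ'(θ) dθ ds ≤ η h_M ∫_{−h_M}^{−h₁} ∫_{t+s}^{t} ξ'(θ)ᵀ S ξ'(θ) dθ ds + η (h_M − h₁) ∫_{−h₁}^{0} ∫_{t+s}^{t} ξ'(θ)ᵀ S ξ'(θ) dθ ds. -/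
open Matrix Set

/-- **Upper bound (31)** in the infinitesimal-generator computation of the
stochastic stability analysis: bound on the transition-rate-weighted sum of
double integrals `Σ_j π_{ij} h_j ∫_{−h_j}^{0} ∫_{t+s}^{t} ξ'ᵀ S ξ'`. -/
theorem transition_rate_double_integral_bound {n M : ℕ} (i : Fin M) (π : Fin M → ℝ)
    (hπ : ∀ j, j ≠ i → 0 ≤ π j)
    (hπi : π i = -∑ j ∈ Finset.univ.erase i, π j)
    (S : Matrix (Fin n) (Fin n) ℝ) (hS : S.PosSemidef)
    (hdel : Fin M → ℝ) (hlo hhi : ℝ) (hlo0 : 0 < hlo)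
    (hbd : ∀ j, hlo ≤ hdel j ∧ hdel j ≤ hhi)
    (η : ℝ) (hη : -π i ≤ η)
    (ξ ξ' : ℝ → Fin n → ℝ) (hξ : ∀ s, HasDerivAt ξ (ξ' s) s)
    (hc : Continuous ξ') (t : ℝ) :
    ∑ j, π j * hdel j *
        ∫ s in (-(hdel j))..(0 : ℝ), ∫ θ in (t + s)..t, (ξ' θ) ⬝ᵥ (S *ᵥ ξ' θ) ≤
      η * hhi * (∫ s in (-hhi)..(-hlo), ∫ θ in (t + s)..t, (ξ' θ) ⬝ᵥ (S *ᵥ ξ' θ)) +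
        η * (hhi - hlo) *
          ∫ s in (-hlo)..(0 : ℝ), ∫ θ in (t + s)..t, (ξ' θ) ⬝ᵥ (S *ᵥ ξ' θ) := by
  set f : ℝ → ℝ := fun θ => (ξ' θ) ⬝ᵥ (S *ᵥ ξ' θ) with hf
  have hfc : Continuous f := hc.dotProduct (continuous_const.matrix_mulVec hc)
  have hf0 : ∀ θ, 0 ≤ f θ := fun θ => by simpa using hS.dotProduct_mulVec_nonneg (ξ' θ)
  set G : ℝ → ℝ := fun s => ∫ θ in (t + s)..t, f θ with hG
  have hGc : Continuous G := by
    have h1 : Continuous fun s : ℝ => ∫ θ in t..(t + s), f θ := by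
      have h0 := (intervalIntegral.continuous_primitive (μ := MeasureTheory.volume)
        (fun a b => hfc.intervalIntegrable a b) t)
      exact h0.comp (continuous_const.add continuous_id)
    have heq : G = fun s => -∫ θ in t..(t + s), f θ := by
      funext s
      exact intervalIntegral.integral_symm t (t + s)
    rw [heq]; exact h1.neg
  have hG0 : ∀ s ≤ (0 : ℝ), 0 ≤ G s := fun s hs =>
    intervalIntegral.integral_nonneg (by linarith) (fun θ _ => hf0 θ)
  set F : ℝ → ℝ := fun u => ∫ s in (-u)..(0 : ℝ), G s with hF
  have hFint : ∀ a b : ℝ, IntervalIntegrable G MeasureTheory.volume a b :=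
    fun a b => hGc.intervalIntegrable a b
  have hF0 : ∀ u, 0 ≤ u → 0 ≤ F u := fun u hu =>
    intervalIntegral.integral_nonneg (by linarith) (fun s hs => hG0 s hs.2)
  have hFmono : ∀ u v : ℝ, 0 ≤ u → u ≤ v → F u ≤ F v := by
    intro u v hu huv
    have hsplit : (∫ s in (-v)..(-u), G s) + ∫ s in (-u)..(0:ℝ), G s
        = ∫ s in (-v)..(0:ℝ), G s :=
      intervalIntegral.integral_add_adjacent_intervals (hFint _ _) (hFint _ _)
    have hnn : 0 ≤ ∫ s in (-v)..(-u), G s :=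
      intervalIntegral.integral_nonneg (by linarith) (fun s hs => hG0 s (by linarith [hs.2]))
    simp only [hF]
    linarith
  have hlolehhi : hlo ≤ hhi := le_trans (hbd i).1 (hbd i).2
  have hhi0 : 0 ≤ hhi := le_trans hlo0.le hlolehhi
  -- the RHS equals η * (hhi * F hhi - hlo * F hlo)
  have hsplit2 : (∫ s in (-hhi)..(-hlo), G s) = F hhi - F hlo := by
    have := intervalIntegral.integral_add_adjacent_intervals (μ := MeasureTheory.volume)
      (a := -hhi) (b := -hlo) (c := (0:ℝ)) (hFint _ _) (hFint _ _)
    simp only [hF]; linarith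
  have hAB : hlo * F hlo ≤ hhi * F hhi :=
    mul_le_mul hlolehhi (hFmono _ _ hlo0.le hlolehhi) (hF0 _ hlo0.le) hhi0
  have hη0 : 0 ≤ η := by
    refine le_trans ?_ hη
    rw [hπi, neg_neg]
    exact Finset.sum_nonneg (fun j hj => hπ j (Finset.ne_of_mem_erase hj))
  have key : ∀ j, π j * hdel j * F (hdel j) ≤
      (if j = i then π i * (hlo * F hlo) else π j * (hhi * F hhi)) := by
    intro j
    by_cases hji : j = i
    · subst hji
      rw [if_pos rfl]
      have hπj : π j ≤ 0 := by
        rw [hπi, neg_nonpos]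
        exact Finset.sum_nonneg (fun k hk => hπ k (Finset.ne_of_mem_erase hk))
      have h1 : hlo * F hlo ≤ hdel j * F (hdel j) :=
        mul_le_mul (hbd j).1 (hFmono _ _ hlo0.le (hbd j).1) (hF0 _ hlo0.le)
          (le_trans hlo0.le (hbd j).1)
      nlinarith
    · simp only [if_neg hji]
      have hπj := hπ j hji
      have h1 : hdel j * F (hdel j) ≤ hhi * F hhi :=
        mul_le_mul (hbd j).2 (hFmono _ _ (le_trans hlo0.le (hbd j).1) (hbd j).2)
          (hF0 _ (le_trans hlo0.le (hbd j).1)) hhi0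
      nlinarith
  calc ∑ j, π j * hdel j * F (hdel j)
      ≤ ∑ j, (if j = i then π i * (hlo * F hlo) else π j * (hhi * F hhi)) :=
        Finset.sum_le_sum (fun j _ => key j)
    _ = π i * (hlo * F hlo) + ∑ j ∈ Finset.univ.erase i, π j * (hhi * F hhi) := by
        rw [← Finset.add_sum_erase _ _ (Finset.mem_univ i), if_pos rfl]
        congr 1
        refine Finset.sum_congr rfl (fun j hj => ?_)
        rw [if_neg (Finset.ne_of_mem_erase hj)]
    _ = (-π i) * (hhi * F hhi - hlo * F hlo) := by
        rw [← Finset.sum_mul]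
        have : ∑ j ∈ Finset.univ.erase i, π j = -π i := by rw [hπi, neg_neg]
        rw [this]; ring
    _ ≤ η * (hhi * F hhi - hlo * F hlo) :=
        mul_le_mul_of_nonneg_right hη (by linarith)
    _ = η * hhi * (F hhi - F hlo) + η * (hhi - hlo) * F hlo := by ring
    _ = η * hhi * (∫ s in (-hhi)..(-hlo), G s) + η * (hhi - hlo) * F hlo := by
        rw [hsplit2]
end
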